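/- Let d > 2 be an integer, B > 0, A = −((d−2)/2)√(B/(d−1)), r₀ = (B/(d−1))^(1/4), m an integer. The function u₃(r) = r⁻¹·(r² − r₀²)^(−1/2 − (1−d−dm)/(2d)) · (r² + (d−1)r₀²)^(−1/2 + (1−d−dm)/(2d) + d(1+2m)/4) satisfies, for r > r₀, the ODE u₃'(r) = (3A·r² + B + (d(m + 1/2) − 3)·r⁴)/(r·(r⁴ − 2A·r² − B)) · u₃(r). -/

import Mathlib

theorem radial_ode_u3 (d : ℤ) (hd : d > 2) (B : ℝ) (hB : B > 0)
    (A r₀ : ℝ) (m : ℤ) (u₃ : ℝ → ℝ)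
    (hA : A = -((d - 2 : ℝ) / 2) * Real.sqrt (B / (d - 1)))
    (hr₀ : r₀ = (B / (d - 1)) ^ ((1 : ℝ) / 4))
    (hu : ∀ r : ℝ, u₃ r =
      r⁻¹ * (r ^ 2 - r₀ ^ 2) ^ (-(1 / 2 : ℝ) - (1 - (d : ℝ) - d * m) / (2 * d)) *
      (r ^ 2 + ((d : ℝ) - 1) * r₀ ^ 2) ^
        (-(1 / 2 : ℝ) + (1 - (d : ℝ) - d * m) / (2 * d) + (d : ℝ) * (1 + 2 * m) / 4)) :
    ∀ r : ℝ, r > r₀ →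
      deriv u₃ r =
        (3 * A * r ^ 2 + B + ((d : ℝ) * ((m : ℝ) + 1 / 2) - 3) * r ^ 4) /
          (r * (r ^ 4 - 2 * A * r ^ 2 - B)) * u₃ r := by
  intro r hr
  have hd2 : (d : ℝ) > 2 := by exact_mod_cast hd
  have hd1 : (0:ℝ) < (d:ℝ) - 1 := by linarith
  have hd0 : (d:ℝ) ≠ 0 := by linarith
  have hc : 0 < B / ((d:ℝ) - 1) := div_pos hB hd1
  have hr₀pos : 0 < r₀ := by rw [hr₀]; positivity
  have hrpos : 0 < r := hr₀pos.trans hr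
  have hP : 0 < r ^ 2 - r₀ ^ 2 := by nlinarith
  have hQ : 0 < r ^ 2 + ((d:ℝ) - 1) * r₀ ^ 2 := by positivity
  have hr04 : r₀ ^ 4 = B / ((d:ℝ) - 1) := by
    rw [hr₀, ← Real.rpow_natCast ((B / ((d:ℝ)-1)) ^ ((1:ℝ)/4)) 4,
      ← Real.rpow_mul hc.le]
    norm_num
  have hsq : Real.sqrt (B / ((d:ℝ) - 1)) = r₀ ^ 2 := by
    rw [hr₀, Real.sqrt_eq_rpow, ← Real.rpow_natCast ((B / ((d:ℝ)-1)) ^ ((1:ℝ)/4)) 2,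
      ← Real.rpow_mul hc.le]
    norm_num
  have hB' : B = ((d:ℝ) - 1) * r₀ ^ 4 := by rw [hr04]; field_simp
  set α := (-(1 / 2 : ℝ) - (1 - (d : ℝ) - d * m) / (2 * d)) with hα
  set β := (-(1 / 2 : ℝ) + (1 - (d : ℝ) - d * m) / (2 * d) + (d : ℝ) * (1 + 2 * m) / 4) with hβ
  have hfun : u₃ = fun r : ℝ =>
      r⁻¹ * (r ^ 2 - r₀ ^ 2) ^ α * (r ^ 2 + ((d:ℝ) - 1) * r₀ ^ 2) ^ β := funext hu
  have hPd : HasDerivAt (fun r : ℝ => r ^ 2 - r₀ ^ 2) (2 * r) r := by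
    simpa using (hasDerivAt_pow 2 r).sub_const (r₀ ^ 2)
  have hQd : HasDerivAt (fun r : ℝ => r ^ 2 + ((d:ℝ) - 1) * r₀ ^ 2) (2 * r) r := by
    simpa using (hasDerivAt_pow 2 r).add_const (((d:ℝ) - 1) * r₀ ^ 2)
  have h1 : HasDerivAt (fun r : ℝ => r⁻¹) (-(r ^ 2)⁻¹) r := by
    simpa using hasDerivAt_inv hrpos.ne'
  have h2 := hPd.rpow_const (p := α) (Or.inl hP.ne')
  have h3 := hQd.rpow_const (p := β) (Or.inl hQ.ne')
  have hD : HasDerivAt (fun r : ℝ => r⁻¹ * (r ^ 2 - r₀ ^ 2) ^ α * (r ^ 2 + ((d:ℝ) - 1) * r₀ ^ 2) ^ β) _ r :=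
    (h1.mul h2).mul h3
  rw [hfun]
  rw [hD.deriv]
  simp only [Pi.mul_apply]
  have hPe : (r ^ 2 - r₀ ^ 2) ^ (α - 1)
      = (r ^ 2 - r₀ ^ 2) ^ α / (r ^ 2 - r₀ ^ 2) := by
    rw [Real.rpow_sub hP, Real.rpow_one]
  have hQe : (r ^ 2 + ((d:ℝ) - 1) * r₀ ^ 2) ^ (β - 1)
      = (r ^ 2 + ((d:ℝ) - 1) * r₀ ^ 2) ^ β / (r ^ 2 + ((d:ℝ) - 1) * r₀ ^ 2) := by
    rw [Real.rpow_sub hQ, Real.rpow_one]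
  have ePQ : r ^ 4 - 2 * A * r ^ 2 - B
      = (r ^ 2 - r₀ ^ 2) * (r ^ 2 + ((d:ℝ) - 1) * r₀ ^ 2) := by
    rw [hA, hsq]; nlinarith [hB']
  rw [hPe, hQe, ePQ, hA, hsq]
  rw [hB']
  generalize (r ^ 2 - r₀ ^ 2) ^ α = X
  generalize (r ^ 2 + ((d:ℝ) - 1) * r₀ ^ 2) ^ β = Y
  rw [hα, hβ]
  field_simp
  ring
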